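/- Let V be a finite type, c : V → V → ℝ≥0 a capacity function, S ⊆ V a subset, P ≥ 1 an integer, and s, t distinct vertices of V with s ∉ S and t ∉ S. Then the P-fold replication c_P of S admits a minimum s-t cut A (with the unique copies of s and t satisfying s ∈ A, t ∉ A) such that for every v ∈ S and all i, j : Fin P, the copy (v,i) lies in A if and only if the copy (v,j) lies in A; that is, all P copies of every vertex lie on the same side of the cut. -/

import Mathlib

/-!
STATEMENT 3: For distinct `s, t ∉ S`, the P-fold replication of `S` admits a minimum
s-t cut in which, for every `v ∈ S`, all `P` copies of `v` lie on the same side.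
-/

open Finset

attribute [local instance] Classical.propDecidable

noncomputable section

/-- The value of the cut `A` for the capacity function `c`. -/
def cutValue {W : Type*} [Fintype W] (c : W → W → NNReal) (A : Finset W) : NNReal :=
  ∑ u ∈ A, ∑ v ∈ Aᶜ, c u v

/-- `A` is a minimum `s`-`t` cut for the capacity function `c`. -/
def IsMinCut {W : Type*} [Fintype W] (c : W → W → NNReal) (s t : W) (A : Finset W) : Prop :=
  s ∈ A ∧ t ∉ A ∧ ∀ B : Finset W, s ∈ B → t ∉ B → cutValue c A ≤ cutValue c B

/-- The capacity function of the `P`-fold replication of the subset `S`. -/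
def repCap {V : Type*} (c : V → V → NNReal) (S : Set V) (P : ℕ) :
    ({v : V // v ∉ S} ⊕ (↥S × Fin P)) → ({v : V // v ∉ S} ⊕ (↥S × Fin P)) → NNReal
  | Sum.inl u, Sum.inl v => c u.1 v.1
  | Sum.inl u, Sum.inr (v, _) => c u.1 v.1
  | Sum.inr (v, _), Sum.inl u => c v.1 u.1
  | Sum.inr (u, i), Sum.inr (v, j) => if i = j then c u.1 v.1 else 0

namespace RepAux

variable {V : Type*} [Fintype V] (c : V → V → NNReal) (S : Set V) (P : ℕ)

abbrev WT := ({v : V // v ∉ S} ⊕ (↥S × Fin P))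

/-- indicator summand -/
def F (B : Finset (WT S P)) (u v : WT S P) : NNReal :=
  if u ∈ B ∧ v ∉ B then repCap c S P u v else 0

lemma sum_cut {W : Type*} [Fintype W] [DecidableEq W] (f : W → W → NNReal) (B : Finset W) :
    ∑ u ∈ B, ∑ v ∈ Bᶜ, f u v = ∑ u : W, ∑ v : W, if u ∈ B ∧ v ∉ B then f u v else 0 := by
  simp [ite_and, ← Finset.sum_filter, Finset.filter_mem_eq_inter]
  refine Finset.sum_congr rfl fun u _ => ?_
  rw [Finset.sum_ite, Finset.sum_const_zero, zero_add]
  congr 1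
  ext v
  simp

lemma cutValue_eq_sumF (B : Finset (WT S P)) :
    cutValue (repCap c S P) B = ∑ u, ∑ v, F c S P B u v := by
  unfold cutValue F
  convert sum_cut (repCap c S P) B using 1 <;> congr!

/-- the contribution of slice `i` -/
def g (B : Finset (WT S P)) (i : Fin P) : NNReal :=
  (∑ u : {v : V // v ∉ S}, ∑ v : ↥S, F c S P B (Sum.inl u) (Sum.inr (v, i)))
  + (∑ v : ↥S, ∑ u : {v : V // v ∉ S}, F c S P B (Sum.inr (v, i)) (Sum.inl u))
  + (∑ v : ↥S, ∑ w : ↥S, F c S P B (Sum.inr (v, i)) (Sum.inr (w, i)))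

def base (B : Finset (WT S P)) : NNReal :=
  ∑ u : {v : V // v ∉ S}, ∑ v : {v : V // v ∉ S}, F c S P B (Sum.inl u) (Sum.inl v)

lemma F_ne (B : Finset (WT S P)) (v w : ↥S) {i j : Fin P} (h : i ≠ j) :
    F c S P B (Sum.inr (v, i)) (Sum.inr (w, j)) = 0 := by
  simp [F, repCap, h]

lemma cutValue_decomp (B : Finset (WT S P)) :
    cutValue (repCap c S P) B = base c S P B + ∑ i, g c S P B i := by
  rw [cutValue_eq_sumF]
  rw [Fintype.sum_sum_type]
  have h1 : ∀ u : WT S P, ∑ v, F c S P B u v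
      = (∑ a, F c S P B u (Sum.inl a)) + ∑ b : ↥S × Fin P, F c S P B u (Sum.inr b) :=
    fun u => Fintype.sum_sum_type _
  simp only [h1]
  rw [Finset.sum_add_distrib, Finset.sum_add_distrib]
  have h2 : ∀ (f : ↥S × Fin P → NNReal), ∑ b : ↥S × Fin P, f b = ∑ v : ↥S, ∑ i, f (v, i) :=
    fun f => Fintype.sum_prod_type _
  -- inr-inr double sum collapses to diagonal in indices
  have h3 : (∑ b : ↥S × Fin P, ∑ b' : ↥S × Fin P, F c S P B (Sum.inr b) (Sum.inr b'))
      = ∑ i, ∑ v : ↥S, ∑ w : ↥S, F c S P B (Sum.inr (v, i)) (Sum.inr (w, i)) := by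
    rw [h2]
    rw [Finset.sum_comm]
    refine Finset.sum_congr rfl fun i _ => Finset.sum_congr rfl fun v _ => ?_
    rw [h2]
    rw [Finset.sum_comm]
    rw [Finset.sum_eq_single i]
    · intro j _ hj
      exact Finset.sum_eq_zero fun w _ => F_ne c S P B v w (Ne.symm hj)
    · intro h; exact absurd (Finset.mem_univ i) h
  rw [h3]
  simp only [h2]
  unfold base g
  have e1 : (∑ x : {v : V // v ∉ S}, ∑ v : ↥S, ∑ i : Fin P, F c S P B (Sum.inl x) (Sum.inr (v, i)))
      = ∑ i : Fin P, ∑ x : {v : V // v ∉ S}, ∑ v : ↥S, F c S P B (Sum.inl x) (Sum.inr (v, i)) := by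
    rw [show (∑ x : {v : V // v ∉ S}, ∑ v : ↥S, ∑ i : Fin P, F c S P B (Sum.inl x) (Sum.inr (v, i)))
        = ∑ x : {v : V // v ∉ S}, ∑ i : Fin P, ∑ v : ↥S, F c S P B (Sum.inl x) (Sum.inr (v, i))
      from Finset.sum_congr rfl fun x _ => Finset.sum_comm]
    exact Finset.sum_comm
  have e2 : (∑ v : ↥S, ∑ i : Fin P, ∑ u : {v : V // v ∉ S}, F c S P B (Sum.inr (v, i)) (Sum.inl u))
      = ∑ i : Fin P, ∑ v : ↥S, ∑ u : {v : V // v ∉ S}, F c S P B (Sum.inr (v, i)) (Sum.inl u) :=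
    Finset.sum_comm
  rw [e1, e2, Finset.sum_add_distrib, Finset.sum_add_distrib]
  ring

end RepAux

set_option maxHeartbeats 1000000 in
theorem exists_minCut_copies_same_side {V : Type*} [Fintype V]
    (c : V → V → NNReal) (S : Set V) (P : ℕ) (hP : 1 ≤ P)
    (s t : V) (hst : s ≠ t) (hs : s ∉ S) (ht : t ∉ S) :
    ∃ A : Finset ({v : V // v ∉ S} ⊕ (↥S × Fin P)),
      IsMinCut (repCap c S P) (Sum.inl ⟨s, hs⟩) (Sum.inl ⟨t, ht⟩) A ∧
      ∀ (v : ↥S) (i j : Fin P), Sum.inr (v, i) ∈ A ↔ Sum.inr (v, j) ∈ A := by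
  classical
  set sV : RepAux.WT S P := Sum.inl ⟨s, hs⟩ with hsV
  set tV : RepAux.WT S P := Sum.inl ⟨t, ht⟩ with htV
  have hstV : sV ≠ tV := by
    simp only [hsV, htV]
    intro h
    exact hst (congrArg Subtype.val (Sum.inl.inj h))
  -- a minimum cut exists
  obtain ⟨A, hAmem, hAmin⟩ := Finset.exists_min_image
    ((Finset.univ : Finset (Finset (RepAux.WT S P))).filter (fun B => sV ∈ B ∧ tV ∉ B))
    (cutValue (repCap c S P))
    ⟨{sV}, by simp [Finset.mem_filter, hstV, Ne.symm hstV]⟩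
  rw [Finset.mem_filter] at hAmem
  obtain ⟨-, hsA, htA⟩ := hAmem
  have hAmin' : ∀ B : Finset (RepAux.WT S P), sV ∈ B → tV ∉ B →
      cutValue (repCap c S P) A ≤ cutValue (repCap c S P) B := by
    intro B h1 h2
    exact hAmin B (Finset.mem_filter.mpr ⟨Finset.mem_univ _, h1, h2⟩)
  -- choose the best slice
  have hPfin : Nonempty (Fin P) := ⟨⟨0, hP⟩⟩
  obtain ⟨i₀, -, hi₀⟩ := Finset.exists_min_image (Finset.univ : Finset (Fin P))
    (RepAux.g c S P A) Finset.univ_nonempty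
  -- the symmetrized cut
  set A' : Finset (RepAux.WT S P) := Finset.univ.filter
    (fun w => match w with
      | Sum.inl u => Sum.inl u ∈ A
      | Sum.inr (v, _) => Sum.inr (v, i₀) ∈ A) with hA'
  have memL : ∀ u : {v : V // v ∉ S}, (Sum.inl u ∈ A') ↔ (Sum.inl u ∈ A) := by
    intro u; simp [hA']
  have memR : ∀ (v : ↥S) (i : Fin P), (Sum.inr (v, i) ∈ A') ↔ (Sum.inr (v, i₀) ∈ A) := by
    intro v i; simp [hA']
  have hbase : RepAux.base c S P A' = RepAux.base c S P A := by
    unfold RepAux.base RepAux.F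
    refine Finset.sum_congr rfl fun u _ => Finset.sum_congr rfl fun v _ => ?_
    exact if_congr (and_congr (memL u) (not_congr (memL v))) rfl rfl
  have hg : ∀ i : Fin P, RepAux.g c S P A' i = RepAux.g c S P A i₀ := by
    intro i
    unfold RepAux.g RepAux.F
    congr 1
    · congr 1
      · refine Finset.sum_congr rfl fun u _ => Finset.sum_congr rfl fun v _ => ?_
        exact if_congr (and_congr (memL u) (not_congr (memR v i))) rfl rfl
      · refine Finset.sum_congr rfl fun v _ => Finset.sum_congr rfl fun u _ => ?_
        exact if_congr (and_congr (memR v i) (not_congr (memL u))) rfl rfl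
    · refine Finset.sum_congr rfl fun v _ => Finset.sum_congr rfl fun w _ => ?_
      refine if_congr (and_congr (memR v i) (not_congr (memR w i))) ?_ rfl
      simp [repCap]
  have hle : cutValue (repCap c S P) A' ≤ cutValue (repCap c S P) A := by
    rw [RepAux.cutValue_decomp, RepAux.cutValue_decomp, hbase]
    refine add_le_add le_rfl ?_
    calc ∑ i, RepAux.g c S P A' i = ∑ i, RepAux.g c S P A i₀ := by simp [hg]
      _ ≤ ∑ i, RepAux.g c S P A i := Finset.sum_le_sum fun i _ => hi₀ i (Finset.mem_univ i)
  refine ⟨A', ⟨(memL _).mpr hsA, fun h => htA ((memL _).mp h), fun B h1 h2 => ?_⟩, ?_⟩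
  · exact le_trans hle (hAmin' B h1 h2)
  · intro v i j
    rw [memR v i, memR v j]


end
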